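/- Let n ≥ 1 and let a ≤ b be reals. Let V : ℝ × ℝⁿ → ℝ and f : ℝ × ℝⁿ → ℝⁿ be continuously differentiable, and define g : ℝ × ℝⁿ → ℝ by g(t,x) = ∂V/∂t(t,x) + ⟨∇ₓV(t,x), f(t,x)⟩. Assume that for all t ∈ [a,b] and all x ∈ ℝⁿ with V(t,x) = 1 one has ∇ₓV(t,x) ≠ 0. Suppose there exist δ > 0, t ∈ [a,b], and x ∈ ℝⁿ with V(t,x) = 1 and g(t,x) > δ. Then there exists an open interval I containing t such that for every τ ∈ I there exists y ∈ ℝⁿ with V(τ,y) = 1 and g(τ,y) > 0. -/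

import Mathlib

open Set

/-- Lemma 3 of the paper (the sampling lemma): let `g(t,x) = ∂V/∂t + ⟨∇ₓV, f⟩` be the
derivative of `V` along the flow of `ẋ = f(t,x)`, and suppose the spatial gradient of
`V` does not vanish on the level set `{V = 1}` for `t ∈ [a,b]`. If at some `t ∈ [a,b]`
there is a point `x` on the level set with `g(t,x) > δ > 0`, then there is an open
interval around `t` such that at every time `τ` in it there is a point `y` on the level
set `{V(τ,·) = 1}` with `g(τ,y) > 0`. -/
theorem descent_violation_persists
    (n : ℕ) (hn : 1 ≤ n) (a b : ℝ) (hab : a ≤ b)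
    (V : ℝ × EuclideanSpace ℝ (Fin n) → ℝ) (hV : ContDiff ℝ 1 V)
    (f : ℝ × EuclideanSpace ℝ (Fin n) → EuclideanSpace ℝ (Fin n)) (hf : ContDiff ℝ 1 f)
    (g : ℝ × EuclideanSpace ℝ (Fin n) → ℝ)
    (hg : ∀ p : ℝ × EuclideanSpace ℝ (Fin n),
      g p = deriv (fun s => V (s, p.2)) p.1
        + fderiv ℝ (fun y => V (p.1, y)) p.2 (f p))
    (hgrad : ∀ t ∈ Icc a b, ∀ x : EuclideanSpace ℝ (Fin n), V (t, x) = 1 →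
      fderiv ℝ (fun y => V (t, y)) x ≠ 0)
    (δ : ℝ) (hδ : 0 < δ) (t : ℝ) (ht : t ∈ Icc a b)
    (x : EuclideanSpace ℝ (Fin n)) (hVx : V (t, x) = 1) (hgx : g (t, x) > δ) :
    ∃ l u : ℝ, l < t ∧ t < u ∧ ∀ τ ∈ Ioo l u,
      ∃ y : EuclideanSpace ℝ (Fin n), V (τ, y) = 1 ∧ g (τ, y) > 0 := by
  have hVd : Differentiable ℝ V := hV.differentiable one_ne_zero
  -- g is continuous
  have hgeq : ∀ p : ℝ × EuclideanSpace ℝ (Fin n),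
      g p = fderiv ℝ V p (1, 0) + fderiv ℝ V p (0, f p) := by
    intro p
    have h1 : HasDerivAt (fun s => V (s, p.2)) (fderiv ℝ V p (1, 0)) p.1 := by
      have := (hVd p).hasFDerivAt.comp_hasDerivAt p.1
        ((hasFDerivAt_prodMk_left (𝕜 := ℝ) p.1 p.2).hasDerivAt)
      exact this
    have h2 : HasFDerivAt (fun y => V (p.1, y))
        ((fderiv ℝ V p).comp (ContinuousLinearMap.inr ℝ ℝ (EuclideanSpace ℝ (Fin n)))) p.2 :=
      (hVd p).hasFDerivAt.comp p.2 (hasFDerivAt_prodMk_right (𝕜 := ℝ) p.1 p.2)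
    rw [hg p, h1.deriv, h2.fderiv]
    rfl
  have hgc : Continuous g := by
    have hfc : Continuous (fderiv ℝ V) := hV.continuous_fderiv one_ne_zero
    have : Continuous fun p : ℝ × EuclideanSpace ℝ (Fin n) =>
        fderiv ℝ V p (1, 0) + fderiv ℝ V p (0, f p) :=
      (hfc.clm_apply continuous_const).add
        (hfc.clm_apply (continuous_const.prodMk hf.continuous))
    exact (funext hgeq : g = _) ▸ this
  -- the level-set gradient
  set L : EuclideanSpace ℝ (Fin n) →L[ℝ] ℝ := fderiv ℝ (fun y => V (t, y)) x with hL
  have hLx : HasFDerivAt (fun y => V (t, y)) L x := by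
    have : DifferentiableAt ℝ (fun y => V (t, y)) x :=
      (hVd (t, x)).comp x ((differentiableAt_const t).prodMk differentiableAt_id)
    exact this.hasFDerivAt
  have hLne : L ≠ 0 := hgrad t ht x hVx
  clear_value L
  obtain ⟨w, hw⟩ : ∃ w, L w ≠ 0 := by
    by_contra h
    push_neg at h
    exact hLne (ContinuousLinearMap.ext fun w => by simp [h w])
  obtain ⟨v, hLv⟩ : ∃ v : EuclideanSpace ℝ (Fin n), L v = 1 :=
    ⟨(L w)⁻¹ • w, by simp [inv_mul_cancel₀ hw]⟩
  -- h(s) = V (t, x + s • v) has derivative 1 at 0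
  have hder : HasDerivAt (fun s : ℝ => V (t, x + s • v)) 1 0 := by
    have h1 : HasDerivAt (fun s : ℝ => x + s • v) v 0 := by
      simpa using ((hasDerivAt_id (0:ℝ)).smul_const v).const_add x
    have hLx' : HasFDerivAt (fun y => V (t, y)) L (x + (0:ℝ) • v) := by simpa using hLx
    have h2 := hLx'.comp_hasDerivAt 0 h1
    rwa [hLv] at h2
  -- find ε with V(t, x+εv) > 1 > V(t, x-εv)
  have hslope := hasDerivAt_iff_tendsto_slope.mp hder
  have hev : ∀ᶠ s in nhdsWithin 0 {(0:ℝ)}ᶜ,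
      0 < slope (fun s : ℝ => V (t, x + s • v)) 0 s :=
    hslope (Ioi_mem_nhds one_pos)
  obtain ⟨ε₀, hε₀, hsub⟩ := Metric.mem_nhdsWithin_iff.mp hev
  -- g > 0 on a ball around (t, x)
  have hopen : IsOpen {p : ℝ × EuclideanSpace ℝ (Fin n) | 0 < g p} :=
    isOpen_lt continuous_const hgc
  obtain ⟨r, hr, hball⟩ := Metric.isOpen_iff.mp hopen (t, x) (lt_trans hδ hgx)
  obtain ⟨ε, hεpos, hεle, hεr⟩ : ∃ ε : ℝ, 0 < ε ∧ ε ≤ ε₀ / 2 ∧ ε * ‖v‖ < r := by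
    refine ⟨min (ε₀ / 2) (r / (2 * (‖v‖ + 1))), lt_min (half_pos hε₀) (div_pos hr (by positivity)),
      min_le_left _ _, ?_⟩
    have hN : (0:ℝ) ≤ ‖v‖ := norm_nonneg v
    have h2 : min (ε₀ / 2) (r / (2 * (‖v‖ + 1))) ≤ r / (2 * (‖v‖ + 1)) := min_le_right _ _
    have h2' : min (ε₀ / 2) (r / (2 * (‖v‖ + 1))) * (2 * (‖v‖ + 1)) ≤ r := by
      rw [← le_div_iff₀ (by positivity)]; exact h2
    have hm : 0 < min (ε₀ / 2) (r / (2 * (‖v‖ + 1))) :=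
      lt_min (half_pos hε₀) (div_pos hr (by positivity))
    nlinarith [mul_pos hm (show (0:ℝ) < ‖v‖ + 2 by linarith)]
  have hεslope : ∀ s : ℝ, s ≠ 0 → |s| ≤ ε → 0 < slope (fun s : ℝ => V (t, x + s • v)) 0 s := by
    intro s hs hsle
    refine hsub ⟨?_, hs⟩
    simp only [Metric.mem_ball, Real.dist_eq, sub_zero]
    calc |s| ≤ ε := hsle
      _ ≤ ε₀ / 2 := hεle
      _ < ε₀ := by linarith
  have hslope_eval : ∀ s : ℝ, s ≠ 0 → |s| ≤ ε → 0 < (V (t, x + s • v) - 1) / s := by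
    intro s hs hsle
    have := hεslope s hs hsle
    rw [slope_def_field] at this
    simpa [hVx, div_eq_inv_mul] using this
  have hhi : 1 < V (t, x + ε • v) := by
    have := hslope_eval ε hεpos.ne' (le_of_eq (abs_of_pos hεpos))
    have h2 := (div_pos_iff.mp this)
    rcases h2 with ⟨h, _⟩ | ⟨_, h⟩
    · linarith
    · linarith
  have hlo : V (t, x + (-ε) • v) < 1 := by
    have := hslope_eval (-ε) (neg_ne_zero.mpr hεpos.ne') (by rw [abs_neg, abs_of_pos hεpos])
    rcases div_pos_iff.mp this with ⟨_, h⟩ | ⟨h, _⟩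
    · linarith
    · linarith
  -- the open set of good times
  have hWopen : IsOpen {τ : ℝ | 1 < V (τ, x + ε • v) ∧ V (τ, x + (-ε) • v) < 1 ∧ |τ - t| < r} := by
    have hA : IsOpen {τ : ℝ | 1 < V (τ, x + ε • v)} :=
      isOpen_lt continuous_const (hV.continuous.comp (continuous_id.prodMk continuous_const))
    have hB : IsOpen {τ : ℝ | V (τ, x + (-ε) • v) < 1} :=
      isOpen_lt (hV.continuous.comp (continuous_id.prodMk continuous_const)) continuous_const
    have hC : IsOpen {τ : ℝ | |τ - t| < r} :=
      isOpen_lt ((continuous_id.sub continuous_const).abs) continuous_const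
    rw [setOf_and, setOf_and]
    exact hA.inter (hB.inter hC)
  have htW : t ∈ {τ : ℝ | 1 < V (τ, x + ε • v) ∧ V (τ, x + (-ε) • v) < 1 ∧ |τ - t| < r} :=
    ⟨hhi, hlo, by simpa using hr⟩
  obtain ⟨η, hη, hηsub⟩ := Metric.isOpen_iff.mp hWopen t htW
  refine ⟨t - η, t + η, by linarith, by linarith, ?_⟩
  intro τ hτ
  have hτW : τ ∈ {τ : ℝ | 1 < V (τ, x + ε • v) ∧ V (τ, x + (-ε) • v) < 1 ∧ |τ - t| < r} := by
    apply hηsub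
    simp only [Metric.mem_ball, Real.dist_eq]
    rw [abs_sub_lt_iff]
    constructor <;> [linarith [hτ.2]; linarith [hτ.1]]
  obtain ⟨hτhi, hτlo, hτr⟩ := hτW
  -- IVT
  have hkc : ContinuousOn (fun s : ℝ => V (τ, x + s • v)) (Icc (-ε) ε) :=
    (hV.continuous.comp (continuous_const.prodMk
      (continuous_const.add (continuous_id.smul continuous_const)))).continuousOn
  have h1mem : (1:ℝ) ∈ Icc (V (τ, x + (-ε) • v)) (V (τ, x + ε • v)) :=
    ⟨hτlo.le, hτhi.le⟩
  obtain ⟨s, hsmem, hs1⟩ := intermediate_value_Icc (by linarith : -ε ≤ ε) hkc h1mem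
  refine ⟨x + s • v, hs1, ?_⟩
  have : (τ, x + s • v) ∈ Metric.ball ((t : ℝ), x) r := by
    rw [Metric.mem_ball, Prod.dist_eq]
    refine max_lt (by rwa [Real.dist_eq]) ?_
    rw [dist_eq_norm]
    have h1 : ‖x + s • v - x‖ = |s| * ‖v‖ := by
      rw [add_sub_cancel_left, norm_smul, Real.norm_eq_abs]
    rw [h1]
    have hsabs : |s| ≤ ε := abs_le.mpr ⟨hsmem.1, hsmem.2⟩
    calc |s| * ‖v‖ ≤ ε * ‖v‖ := mul_le_mul_of_nonneg_right hsabs (norm_nonneg v)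
      _ < r := hεr
  exact hball this
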